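/- Let u, v : [0,T] → ℝ be nonnegative differentiable functions satisfying u' ≤ v and v' ≤ u·v on [0,T]. Then for all t in [0,T] with (u(0)² + v(0))^{1/2}·t < 1, one has u(t)² + v(t) ≤ (u(0)² + v(0)) / (1 - (u(0)² + v(0))^{1/2}·t)². -/

import Mathlib

set_option maxHeartbeats 1000000

open Set Filter Topology

/-- Grönwall-type comparison lemma: if `u' ≤ v` and `v' ≤ u·v` on `[0,T]` for nonnegative
differentiable `u, v`, then `u(t)² + v(t) ≤ (u(0)² + v(0)) / (1 - √(u(0)² + v(0))·t)²`. -/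
theorem stmt_0 (T : ℝ) (u v u' v' : ℝ → ℝ)
    (hu : ∀ t ∈ Set.Icc (0:ℝ) T, HasDerivAt u (u' t) t)
    (hv : ∀ t ∈ Set.Icc (0:ℝ) T, HasDerivAt v (v' t) t)
    (hu0 : ∀ t ∈ Set.Icc (0:ℝ) T, 0 ≤ u t)
    (hv0 : ∀ t ∈ Set.Icc (0:ℝ) T, 0 ≤ v t)
    (h1 : ∀ t ∈ Set.Icc (0:ℝ) T, u' t ≤ v t)
    (h2 : ∀ t ∈ Set.Icc (0:ℝ) T, v' t ≤ u t * v t)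
    (t : ℝ) (ht : t ∈ Set.Icc (0:ℝ) T)
    (hlt : Real.sqrt (u 0 ^ 2 + v 0) * t < 1) :
    u t ^ 2 + v t ≤ (u 0 ^ 2 + v 0) / (1 - Real.sqrt (u 0 ^ 2 + v 0) * t) ^ 2 := by
  obtain ⟨ht0, htT⟩ := ht
  have h0T : (0:ℝ) ∈ Icc (0:ℝ) T := ⟨le_refl _, le_trans ht0 htT⟩
  set w₀ : ℝ := u 0 ^ 2 + v 0 with hw₀def
  have hw₀ : 0 ≤ w₀ := add_nonneg (sq_nonneg _) (hv0 0 h0T)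
  set s₀ : ℝ := Real.sqrt w₀ with hs₀def
  have hs₀ : 0 ≤ s₀ := Real.sqrt_nonneg _
  have hs₀sq : s₀ ^ 2 = w₀ := Real.sq_sqrt hw₀
  -- Key comparison for any c > s₀ with c * t < 1
  have key : ∀ c : ℝ, s₀ < c → c * t < 1 →
      u t ^ 2 + v t ≤ ((c + s₀) / 2) ^ 2 / (1 - c * t) ^ 2 := by
    intro c hc hct
    have hc0 : 0 < c := lt_of_le_of_lt hs₀ hc
    set A : ℝ := ((c + s₀) / 2) ^ 2 with hAdef
    have hmid : 0 < (c + s₀) / 2 := by linarith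
    have hApos : 0 < A := pow_pos hmid 2
    have hsA : Real.sqrt A = (c + s₀) / 2 := Real.sqrt_sq hmid.le
    have hAc : Real.sqrt A < c := by rw [hsA]; linarith
    have hw₀A : w₀ < A := by
      have : s₀ < (c + s₀) / 2 := by linarith
      nlinarith [hs₀sq]
    have hden : ∀ x ∈ Icc (0:ℝ) t, 0 < 1 - c * x := by
      intro x hx
      have : c * x ≤ c * t := mul_le_mul_of_nonneg_left hx.2 hc0.le
      linarith
    have hsub : Icc (0:ℝ) t ⊆ Icc (0:ℝ) T := Icc_subset_Icc le_rfl htT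
    -- derivative of B
    have hBd : ∀ x ∈ Icc (0:ℝ) t,
        HasDerivAt (fun y => A / (1 - c * y) ^ 2) (2 * c * A / (1 - c * x) ^ 3) x := by
      intro x hx
      have hd := hden x hx
      have hne : (1 - c * x) ^ 2 ≠ 0 := by positivity
      have h1d : HasDerivAt (fun y => 1 - c * y) (-c) x := by
        simpa using ((hasDerivAt_id x).const_mul c).const_sub 1
      have hpow := h1d.pow 2
      have hdiv := (hasDerivAt_const x A).div hpow hne
      refine hdiv.congr_deriv ?_
      simp only [Pi.pow_apply]
      field_simp
      ring
    have hfd : ∀ x ∈ Icc (0:ℝ) T,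
        HasDerivAt (fun y => u y ^ 2 + v y) (2 * u x * u' x + v' x) x := by
      intro x hx
      have := ((hu x hx).pow 2).add (hv x hx)
      refine this.congr_deriv ?_
      push_cast
      ring
    have comp := image_le_of_deriv_right_lt_deriv_boundary'
      (f := fun y => u y ^ 2 + v y) (f' := fun y => 2 * u y * u' y + v' y)
      (a := 0) (b := t)
      (B := fun y => A / (1 - c * y) ^ 2) (B' := fun y => 2 * c * A / (1 - c * y) ^ 3)
      (fun x hx => ((hfd x (hsub hx)).continuousAt).continuousWithinAt)
      (fun x hx => (hfd x (hsub (Ico_subset_Icc_self hx))).hasDerivWithinAt)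
      (by simpa using hw₀A.le)
      (fun x hx => ((hBd x hx).continuousAt).continuousWithinAt)
      (fun x hx => (hBd x (Ico_subset_Icc_self hx)).hasDerivWithinAt)
      ?_ (right_mem_Icc.2 ht0)
    · simpa using comp
    · intro x hx heq
      have hxT : x ∈ Icc (0:ℝ) T := hsub (Ico_subset_Icc_self hx)
      have hd : 0 < 1 - c * x := hden x (Ico_subset_Icc_self hx)
      have hux : 0 ≤ u x := hu0 x hxT
      have hvx : 0 ≤ v x := hv0 x hxT
      have hwx : 0 ≤ u x ^ 2 + v x := add_nonneg (sq_nonneg _) hvx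
      set s : ℝ := Real.sqrt (u x ^ 2 + v x) with hsdef
      set sv : ℝ := Real.sqrt (v x) with hsvdef
      have hs0 : 0 ≤ s := Real.sqrt_nonneg _
      have hsv0 : 0 ≤ sv := Real.sqrt_nonneg _
      have hssq : s ^ 2 = u x ^ 2 + v x := Real.sq_sqrt hwx
      have hsvsq : sv ^ 2 = v x := Real.sq_sqrt hvx
      have hus : u x ≤ s := by nlinarith
      have hsvs : sv ≤ s := by nlinarith
      -- step 1: f' ≤ 3 u v
      have step1 : 2 * u x * u' x + v' x ≤ 3 * u x * v x := by
        have hm : 0 ≤ u x * (v x - u' x) := mul_nonneg hux (sub_nonneg.2 (h1 x hxT))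
        have h2' := h2 x hxT
        nlinarith [hm, h2']
      -- step 2: 3 u v ≤ 2 s^3
      have step2 : 3 * u x * v x ≤ 2 * s ^ 3 := by
        have e1 : 0 ≤ (u x - sv) ^ 2 * (u x + 2 * sv) :=
          mul_nonneg (sq_nonneg _) (by linarith)
        have e2 : 0 ≤ (s - u x) * u x ^ 2 := mul_nonneg (by linarith) (sq_nonneg _)
        have e3 : 0 ≤ (s - sv) * sv ^ 2 := mul_nonneg (by linarith) (sq_nonneg _)
        have e4 : 0 ≤ s * (s - sv) * (s + sv) :=
          mul_nonneg (mul_nonneg hs0 (by linarith)) (by linarith)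
        nlinarith [hssq, hsvsq]
      -- identify s with sqrt A / (1 - c x)
      have heq' : u x ^ 2 + v x = A / (1 - c * x) ^ 2 := heq
      have hs : s = Real.sqrt A / (1 - c * x) := by
        have hq : s ^ 2 = (Real.sqrt A / (1 - c * x)) ^ 2 := by
          rw [hssq, heq', div_pow, Real.sq_sqrt hApos.le]
        have := congrArg Real.sqrt hq
        rwa [Real.sqrt_sq hs0, Real.sqrt_sq (div_nonneg (Real.sqrt_nonneg A) hd.le)] at this
      have hd3 : 0 < (1 - c * x) ^ 3 := pow_pos hd 3
      have step3 : 2 * s ^ 3 < 2 * c * A / (1 - c * x) ^ 3 := by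
        rw [hs, div_pow, mul_div_assoc']
        rw [div_lt_div_iff_of_pos_right hd3]
        nlinarith [Real.sq_sqrt hApos.le, Real.sqrt_nonneg A]
      calc 2 * u x * u' x + v' x ≤ 3 * u x * v x := step1
        _ ≤ 2 * s ^ 3 := step2
        _ < 2 * c * A / (1 - c * x) ^ 3 := step3
  -- limiting argument c → s₀⁺
  have hdent : 0 < 1 - s₀ * t := by linarith
  have hF : ContinuousAt (fun c : ℝ => ((c + s₀) / 2) ^ 2 / (1 - c * t) ^ 2) s₀ := by
    apply ContinuousAt.div
    · fun_prop
    · fun_prop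
    · positivity
  have htend : Tendsto (fun c : ℝ => ((c + s₀) / 2) ^ 2 / (1 - c * t) ^ 2)
      (𝓝[>] s₀) (𝓝 (((s₀ + s₀) / 2) ^ 2 / (1 - s₀ * t) ^ 2)) := by
    simpa using hF.continuousWithinAt.tendsto
  have hev : ∀ᶠ c in 𝓝[>] s₀, u t ^ 2 + v t ≤ ((c + s₀) / 2) ^ 2 / (1 - c * t) ^ 2 := by
    have hmul : Tendsto (fun c : ℝ => c * t) (𝓝[>] s₀) (𝓝 (s₀ * t)) :=
      ((continuous_id.mul continuous_const).continuousAt).continuousWithinAt.tendsto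
    have h1' : ∀ᶠ c in 𝓝[>] s₀, c * t < 1 := hmul.eventually_lt_const hlt
    filter_upwards [h1', self_mem_nhdsWithin] with c hct hc
    exact key c hc hct
  have := ge_of_tendsto htend hev
  have heq : ((s₀ + s₀) / 2) ^ 2 / (1 - s₀ * t) ^ 2 = w₀ / (1 - s₀ * t) ^ 2 := by
    rw [show (s₀ + s₀) / 2 = s₀ by ring, hs₀sq]
  rw [heq] at this
  exact this
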